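/- arXiv:1902.10325 — 2 statements merged into one kernel-verified Lean document; each statement's English description precedes it below -/
import Mathlib

section
/- Let X be a Polish space, (Ξ, 𝒜, ℙ) a complete probability space, T : Ξ → Ξ an ergodic measure-preserving transformation, M : Ξ ⇉ X a measurable set-valued map with closed values, g : X → ℝ ∪ {+∞} lower semicontinuous, and g_n : X → ℝ ∪ {+∞} a sequence of lower semicontinuous functions converging continuously to g. Set E_n(ξ) := ⋂_{k=1}^n M(T^k(ξ)) and M_as := {x ∈ X : x ∈ M(ξ) for ℙ-a.e. ξ}. Assume the robust problem min{g(x) : x ∈ M_as} is feasible (there exists x ∈ M_as with g(x) < +∞) and that, for ℙ-a.e. ξ, the sequence g_n is eventually level-compact on E_n(ξ). Then for ℙ-a.e. ξ ∈ Ξ: ⋂_{ε>0} liminf_n (ε-argmin_{E_n(ξ)} g_n) = argmin_{M_as} g = ⋂_{ε>0} limsup_n (ε-argmin_{E_n(ξ)} g_n), where liminf_n and limsup_n denote the Painlevé–Kuratowski inner and outer limits of sets. -/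
open Filter Topology MeasureTheory Set
open ENNReal

noncomputable section

/-- Epi-convergence of a sequence of extended-real-valued functions on a metric space:
for every `x`, (a) `liminf f n (u n) ≥ g x` along every sequence `u → x`, and
(b) `limsup f n (u n) ≤ g x` along some sequence `u → x`. -/
def EpiConv {X : Type*} [MetricSpace X] (f : ℕ → X → EReal) (g : X → EReal) : Prop :=
  ∀ x : X,
    (∀ u : ℕ → X, Tendsto u atTop (𝓝 x) → g x ≤ atTop.liminf fun n => f n (u n)) ∧
    (∃ u : ℕ → X, Tendsto u atTop (𝓝 x) ∧ (atTop.limsup fun n => f n (u n)) ≤ g x)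

/-- Continuous convergence: `f n (u n) → g x` for every `x` and every sequence `u → x`. -/
def ContConv {X : Type*} [MetricSpace X] (f : ℕ → X → EReal) (g : X → EReal) : Prop :=
  ∀ x : X, ∀ u : ℕ → X, Tendsto u atTop (𝓝 x) →
    Tendsto (fun n => f n (u n)) atTop (𝓝 (g x))

/-- Infimal value of `h` on `C`. -/
def vOn {X : Type*} (h : X → EReal) (C : Set X) : EReal := ⨅ x ∈ C, h x

open Classical in
/-- ε-infimal value of `h` on `C`: `inf_C h + ε` if `inf_C h > -∞`, and `-1/ε` otherwise
(with the convention `1/0 = +∞`, so `-1/0 = -∞`). -/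
def vEpsOn {X : Type*} (h : X → EReal) (C : Set X) (ε : ℝ) : EReal :=
  if vOn h C = ⊥ then (if ε = 0 then ⊥ else ((-ε⁻¹ : ℝ) : EReal))
  else vOn h C + (ε : EReal)

/-- ε-argmin of `h` on `C`: the points of `C` where `h` is below the ε-infimal value. -/
def argminOn {X : Type*} (h : X → EReal) (C : Set X) (ε : ℝ) : Set X :=
  {x ∈ C | h x ≤ vEpsOn h C ε}

/-- Painlevé–Kuratowski outer limit: points whose distance to `S n` has liminf 0. -/
def outerLim {X : Type*} [MetricSpace X] (S : ℕ → Set X) : Set X :=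
  {x | atTop.liminf (fun n => EMetric.infEdist x (S n)) = 0}

/-- Painlevé–Kuratowski inner limit: points whose distance to `S n` has limsup 0. -/
def innerLim {X : Type*} [MetricSpace X] (S : ℕ → Set X) : Set X :=
  {x | atTop.limsup (fun n => EMetric.infEdist x (S n)) = 0}

open Classical in
/-- Indicator function `δ_A`: `0` on `A`, `+∞` off `A`. -/
def delta {X : Type*} (A : Set X) : X → EReal := fun x => if x ∈ A then 0 else ⊤

/-- The sequence `g n` is eventually level-compact on the sets `C n`: for every level `α`
there is `N` such that the union over `n ≥ N` of the `α`-sublevel sets of `g n` on `C n`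
is relatively compact. -/
def EvLevelCompact {X : Type*} [MetricSpace X] (g : ℕ → X → EReal) (C : ℕ → Set X) : Prop :=
  ∀ α : ℝ, ∃ N : ℕ, IsCompact (closure (⋃ n ∈ Ici N, {x ∈ C n | g n x ≤ (α : EReal)}))

/-- Measurability of a set-valued map: preimages of open sets are measurable. -/
def MeasurableMultifun {Ξ X : Type*} [MeasurableSpace Ξ] [TopologicalSpace X]
    (M : Ξ → Set X) : Prop :=
  ∀ U : Set X, IsOpen U → MeasurableSet {ξ | (M ξ ∩ U).Nonempty}

/-- `P` is the countable product `ℙ^∞` of the probability measure `ℙ`: every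
finite-dimensional cylinder has product measure. -/
def IsProductMeasure {Ξ : Type*} [MeasurableSpace Ξ] (P : Measure (ℕ → Ξ))
    (ℙ : Measure Ξ) : Prop :=
  ∀ (s : Finset ℕ) (A : ℕ → Set Ξ), (∀ i, MeasurableSet (A i)) →
    P {ω | ∀ i ∈ s, ω i ∈ A i} = ∏ i ∈ s, ℙ (A i)

/-- Moreau envelope `e_λ g`. -/
def moreau {d : ℕ} (g : EuclideanSpace ℝ (Fin d) → EReal) (lam : ℝ)
    (x : EuclideanSpace ℝ (Fin d)) : EReal :=
  ⨅ u, g u + ((‖x - u‖ ^ 2 / (2 * lam) : ℝ) : EReal)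

lemma tendsto_of_edist_lt {X : Type*} [MetricSpace X] {y : ℕ → X} {x : X}
    (h : ∀ j, edist x (y j) < ((j : ℝ≥0∞) + 1)⁻¹) : Tendsto y atTop (𝓝 x) := by
  rw [EMetric.tendsto_atTop]
  intro ε hε
  obtain ⟨m, hm⟩ := ENNReal.exists_inv_nat_lt hε.ne'
  refine ⟨m, fun j hj => ?_⟩
  rw [edist_comm]
  refine lt_trans (h j) (lt_of_le_of_lt ?_ hm)
  apply ENNReal.inv_le_inv.mpr
  have : (m : ℝ≥0∞) ≤ j := by exact_mod_cast hj
  exact le_trans this le_self_add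

lemma outerLim_extract {X : Type*} [MetricSpace X] {S : ℕ → Set X} {x : X}
    (hx : x ∈ outerLim S) :
    ∃ φ : ℕ → ℕ, StrictMono φ ∧ ∃ y : ℕ → X, (∀ j, y j ∈ S (φ j)) ∧
      Tendsto y atTop (𝓝 x) := by
  have hfreq : ∀ j : ℕ, ∃ᶠ n in atTop, EMetric.infEdist x (S n) < ((j : ℝ≥0∞) + 1)⁻¹ := by
    intro j
    apply frequently_lt_of_liminf_lt (by isBoundedDefault)
    rw [hx]
    simp [ENNReal.inv_pos]
  obtain ⟨φ, hφ, hφ2⟩ := Filter.extraction_forall_of_frequently hfreq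
  refine ⟨φ, hφ, ?_⟩
  have : ∀ j, ∃ z ∈ S (φ j), edist x z < ((j : ℝ≥0∞) + 1)⁻¹ := fun j =>
    EMetric.infEdist_lt_iff.mp (hφ2 j)
  choose y hy1 hy2 using this
  exact ⟨y, hy1, tendsto_of_edist_lt hy2⟩

open Classical in
lemma contConv_subseq {X : Type*} [MetricSpace X] {gn : ℕ → X → EReal} {g : X → EReal}
    (hcc : ContConv gn g) {n : ℕ → ℕ} (hn : StrictMono n) {y : ℕ → X} {x : X}
    (hyx : Tendsto y atTop (𝓝 x)) :
    Tendsto (fun i => gn (n i) (y i)) atTop (𝓝 (g x)) := by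
  set u : ℕ → X := fun m => if h : ∃ i, n i = m then y h.choose else x with hu
  have key : ∀ i, u (n i) = y i := by
    intro i
    have h : ∃ i', n i' = n i := ⟨i, rfl⟩
    have : h.choose = i := hn.injective h.choose_spec
    simp [hu, dif_pos h, this]
  have hux : Tendsto u atTop (𝓝 x) := by
    rw [Metric.tendsto_atTop]
    intro ε hε
    obtain ⟨I, hI⟩ := (Metric.tendsto_atTop.mp hyx) ε hε
    refine ⟨n I, fun m hm => ?_⟩
    by_cases h : ∃ i, n i = m
    · have h1 : n h.choose = m := h.choose_spec
      have h2 : I ≤ h.choose := by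
        rw [← hn.le_iff_le, h1]; exact hm
      simpa [hu, dif_pos h, h1] using hI _ h2
    · simpa [hu, dif_neg h] using hε
  have := (hcc x u hux).comp hn.tendsto_atTop
  refine this.congr fun i => ?_
  simp only [Function.comp_apply, key]

section Det

variable {X : Type*} [MetricSpace X] {E : ℕ → Set X} {Mas : Set X}
  {gn : ℕ → X → EReal} {g : X → EReal}

lemma limit_lemma (hE_closed : ∀ m, IsClosed (E m)) (hE_anti : Antitone E)
    (hsep : ∀ x ∉ Mas, ∃ δ > (0:ℝ), ∃ N, ∀ n ≥ N, E n ∩ Metric.ball x δ = ∅)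
    (hcc : ContConv gn g)
    {n : ℕ → ℕ} (hn : StrictMono n) {y : ℕ → X} {x : X}
    (hy : ∀ i, y i ∈ E (n i)) (hyx : Tendsto y atTop (𝓝 x)) :
    x ∈ Mas ∧ Tendsto (fun i => gn (n i) (y i)) atTop (𝓝 (g x)) := by
  have hxE : ∀ m, x ∈ E m := by
    intro m
    refine (hE_closed m).mem_of_tendsto hyx ?_
    filter_upwards [eventually_ge_atTop m] with i hi
    exact hE_anti (le_trans hi hn.le_apply) (hy i)
  refine ⟨?_, contConv_subseq hcc hn hyx⟩
  by_contra hxM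
  obtain ⟨δ, hδ, N, hN⟩ := hsep x hxM
  have : x ∈ E N ∩ Metric.ball x δ := ⟨hxE N, Metric.mem_ball_self hδ⟩
  rw [hN N le_rfl] at this
  exact this

end Det

section Det2

variable {X : Type*} [MetricSpace X] {E : ℕ → Set X} {Mas : Set X}
  {gn : ℕ → X → EReal} {g : X → EReal}

lemma vOn_le {h : X → EReal} {C : Set X} {x : X} (hx : x ∈ C) : vOn h C ≤ h x :=
  iInf₂_le x hx

lemma exists_lt_of_vOn_lt {h : X → EReal} {C : Set X} {c : EReal} (hlt : vOn h C < c) :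
    ∃ x ∈ C, h x < c := by
  simpa [vOn, iInf_lt_iff] using hlt

lemma limsup_vOn_le (hMasE : ∀ n, Mas ⊆ E n) (hcc : ContConv gn g) :
    atTop.limsup (fun n => vOn (gn n) (E n)) ≤ vOn g Mas := by
  refine le_iInf₂ fun x hx => ?_
  have ht : Tendsto (fun n => gn n x) atTop (𝓝 (g x)) :=
    hcc x (fun _ => x) tendsto_const_nhds
  calc atTop.limsup (fun n => vOn (gn n) (E n)) ≤ atTop.limsup (fun n => gn n x) :=
        limsup_le_limsup (Eventually.of_forall fun n => vOn_le (hMasE n hx))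
    _ = g x := ht.limsup_eq

lemma vOn_le_liminf (hE_closed : ∀ m, IsClosed (E m)) (hE_anti : Antitone E)
    (hsep : ∀ x ∉ Mas, ∃ δ > (0:ℝ), ∃ N, ∀ n ≥ N, E n ∩ Metric.ball x δ = ∅)
    (hcc : ContConv gn g) (hlc : EvLevelCompact gn E) :
    vOn g Mas ≤ atTop.liminf (fun n => vOn (gn n) (E n)) := by
  by_contra hcon
  rw [not_le] at hcon
  obtain ⟨c, hc1, hc2⟩ := EReal.exists_between_coe_real hcon
  have hfreq : ∃ᶠ n in atTop, vOn (gn n) (E n) < (c : EReal) :=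
    frequently_lt_of_liminf_lt (by isBoundedDefault) hc1
  obtain ⟨N, hK⟩ := hlc c
  obtain ⟨φ, hφmono, hφ⟩ := extraction_of_frequently_atTop hfreq
  have hex : ∀ j, ∃ z ∈ E (φ j), gn (φ j) z < (c : EReal) := fun j =>
    exists_lt_of_vOn_lt (hφ j)
  choose z hz1 hz2 using hex
  have hzK : ∀ j, z (j + N) ∈ closure (⋃ n ∈ Ici N, {x ∈ E n | gn n x ≤ (c : EReal)}) := by
    intro j
    refine subset_closure (mem_biUnion ?_ ⟨hz1 _, (hz2 _).le⟩)
    exact le_trans (Nat.le_add_left N j) hφmono.le_apply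
  obtain ⟨x, hxK, ψ, hψmono, hψtend⟩ := hK.tendsto_subseq hzK
  have hnn : StrictMono (fun i => φ (ψ i + N)) := fun i j hij =>
    hφmono (Nat.add_lt_add_right (hψmono hij) N)
  obtain ⟨hxM, htend⟩ := limit_lemma hE_closed hE_anti hsep hcc hnn
    (fun i => hz1 (ψ i + N)) hψtend
  have hgx : g x ≤ (c : EReal) :=
    le_of_tendsto htend (Eventually.of_forall fun i => (hz2 _).le)
  exact absurd (le_trans (vOn_le hxM) hgx) hc2.not_ge

lemma vOn_ne_bot (hMasE : ∀ n, Mas ⊆ E n) (hg_noBot : ∀ x, g x ≠ ⊥)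
    (hg_lsc : LowerSemicontinuous g) (hcc : ContConv gn g) (hlc : EvLevelCompact gn E) :
    vOn g Mas ≠ ⊥ := by
  intro hbot
  obtain ⟨N, hK⟩ := hlc 1
  have hex : ∀ m : ℕ, ∃ x ∈ Mas, g x < ((-(m : ℝ)) : EReal) := by
    intro m
    apply exists_lt_of_vOn_lt
    rw [hbot]
    exact bot_lt_iff_ne_bot.mpr (EReal.coe_ne_bot _)
  choose z hz1 hz2 using hex
  have hzK : ∀ m, z m ∈ closure (⋃ n ∈ Ici N, {x ∈ E n | gn n x ≤ ((1:ℝ) : EReal)}) := by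
    intro m
    have ht : Tendsto (fun n => gn n (z m)) atTop (𝓝 (g (z m))) :=
      hcc (z m) (fun _ => z m) tendsto_const_nhds
    have hlt : g (z m) < ((1:ℝ) : EReal) := lt_trans (hz2 m) (by
      norm_cast
      linarith [Nat.cast_nonneg (α := ℝ) m])
    obtain ⟨n, hn1, hn2⟩ := ((ht.eventually_lt_const hlt).and (eventually_ge_atTop N)).exists
    exact subset_closure (mem_biUnion hn2 ⟨hMasE n (hz1 m), hn1.le⟩)
  obtain ⟨x, hxK, ψ, hψmono, hψtend⟩ := hK.tendsto_subseq hzK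
  -- lsc contradiction: g x > ⊥, find real c < g x
  have hgx := hg_noBot x
  obtain ⟨c, hc1, hc2⟩ := EReal.exists_between_coe_real (bot_lt_iff_ne_bot.mpr hgx)
  have hev : ∀ᶠ i in atTop, (c : EReal) < g (z (ψ i)) :=
    hψtend.eventually (hg_lsc x c hc2)
  obtain ⟨m, hm⟩ := exists_nat_gt (-c)
  have hev2 : ∀ᶠ i in atTop, g (z (ψ i)) < (c : EReal) := by
    filter_upwards [eventually_ge_atTop m] with i hi
    refine lt_trans (hz2 (ψ i)) ?_
    have h3 : (m : ℝ) ≤ ψ i := by exact_mod_cast le_trans hi hψmono.le_apply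
    rw [show ((-(ψ i : ℝ)) : EReal) < (c : EReal) ↔ (-(ψ i : ℝ)) < c from EReal.coe_lt_coe_iff]
    linarith
  obtain ⟨i, h1, h2⟩ := (hev.and hev2).exists
  exact absurd (lt_trans h1 h2) (lt_irrefl _)

end Det2

section Det3

variable {X : Type*} [MetricSpace X] {E : ℕ → Set X} {Mas : Set X}
  {gn : ℕ → X → EReal} {g : X → EReal}

lemma claim1 (hMasE : ∀ n, Mas ⊆ E n) (hcc : ContConv gn g)
    (h_liminf : vOn g Mas ≤ atTop.liminf (fun n => vOn (gn n) (E n)))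
    (hvs_ne_bot : vOn g Mas ≠ ⊥) (hvs_ne_top : vOn g Mas ≠ ⊤) :
    argminOn g Mas 0 ⊆
      ⋂ ε ∈ Ioi (0:ℝ), innerLim (fun n => argminOn (gn n) (E n) ε) := by
  intro x hx
  obtain ⟨hxM, hxv⟩ := hx
  set a := (vOn g Mas).toReal with ha'
  have ha : vOn g Mas = (a : EReal) := (EReal.coe_toReal hvs_ne_top hvs_ne_bot).symm
  have hgx : g x ≤ (a : EReal) := by
    rw [vEpsOn, if_neg hvs_ne_bot, EReal.coe_zero, add_zero, ha] at hxv
    exact hxv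
  refine mem_iInter₂.mpr fun ε hε => ?_
  rw [mem_Ioi] at hε
  have hev1 : ∀ᶠ n in atTop, gn n x < ((a + ε/2 : ℝ) : EReal) := by
    refine (hcc x (fun _ => x) tendsto_const_nhds).eventually_lt_const ?_
    refine lt_of_le_of_lt hgx ?_
    exact_mod_cast (by linarith : a < a + ε/2)
  have hev2 : ∀ᶠ n in atTop, ((a - ε/2 : ℝ) : EReal) < vOn (gn n) (E n) := by
    refine eventually_lt_of_lt_liminf (lt_of_lt_of_le ?_ h_liminf) (by isBoundedDefault)
    rw [ha]
    exact_mod_cast (by linarith : a - ε/2 < a)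
  have hev : ∀ᶠ n in atTop, x ∈ argminOn (gn n) (E n) ε := by
    filter_upwards [hev1, hev2] with n h1 h2
    refine ⟨hMasE n hxM, ?_⟩
    have hnb : vOn (gn n) (E n) ≠ ⊥ := by
      intro hh; rw [hh] at h2; exact absurd h2 (by simp)
    rw [vEpsOn, if_neg hnb]
    calc gn n x ≤ ((a + ε/2 : ℝ) : EReal) := h1.le
      _ = ((a - ε/2 : ℝ) : EReal) + (ε : EReal) := by
          norm_cast; ring
      _ ≤ vOn (gn n) (E n) + (ε : EReal) := add_le_add h2.le le_rfl
  have hzero : ∀ᶠ n in atTop,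
      EMetric.infEdist x (argminOn (gn n) (E n) ε) = 0 :=
    hev.mono fun n h => EMetric.infEdist_zero_of_mem h
  show atTop.limsup (fun n => EMetric.infEdist x (argminOn (gn n) (E n) ε)) = 0
  rw [limsup_congr hzero]
  exact limsup_const 0

lemma claim2 (hE_closed : ∀ m, IsClosed (E m)) (hE_anti : Antitone E)
    (hsep : ∀ x ∉ Mas, ∃ δ > (0:ℝ), ∃ N, ∀ n ≥ N, E n ∩ Metric.ball x δ = ∅)
    (hcc : ContConv gn g)
    (h_limsup : atTop.limsup (fun n => vOn (gn n) (E n)) ≤ vOn g Mas) :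
    (⋂ ε ∈ Ioi (0:ℝ), outerLim (fun n => argminOn (gn n) (E n) ε)) ⊆
      argminOn g Mas 0 := by
  intro x hx
  rw [mem_iInter₂] at hx
  have hmem : ∀ ε : ℝ, 0 < ε → x ∈ Mas ∧ ∀ c : ℝ, vOn g Mas < (c : EReal) →
      g x ≤ ((c + ε : ℝ) : EReal) ⊔ ((-ε⁻¹ : ℝ) : EReal) := by
    intro ε hε
    obtain ⟨φ, hφ, y, hyA, hyx⟩ := outerLim_extract (hx ε hε)
    have hyE : ∀ j, y j ∈ E (φ j) := fun j => (hyA j).1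
    obtain ⟨hxM, htend⟩ := limit_lemma hE_closed hE_anti hsep hcc hφ hyE hyx
    refine ⟨hxM, fun c hc => ?_⟩
    have hev : ∀ᶠ n in atTop, vOn (gn n) (E n) < (c : EReal) :=
      eventually_lt_of_limsup_lt (lt_of_le_of_lt h_limsup hc) (by isBoundedDefault)
    obtain ⟨N, hN⟩ := eventually_atTop.mp hev
    refine le_of_tendsto htend ?_
    filter_upwards [eventually_ge_atTop N] with i hi
    have hvi : vOn (gn (φ i)) (E (φ i)) < (c : EReal) := hN _ (le_trans hi hφ.le_apply)
    have h2 := (hyA i).2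
    by_cases hb : vOn (gn (φ i)) (E (φ i)) = ⊥
    · rw [vEpsOn, if_pos hb, if_neg hε.ne'] at h2
      exact le_sup_of_le_right h2
    · rw [vEpsOn, if_neg hb] at h2
      refine le_sup_of_le_left (le_trans h2 ?_)
      calc vOn (gn (φ i)) (E (φ i)) + (ε : EReal) ≤ (c : EReal) + (ε : EReal) :=
            add_le_add hvi.le le_rfl
        _ = ((c + ε : ℝ) : EReal) := (EReal.coe_add c ε).symm
  have hxM : x ∈ Mas := (hmem 1 one_pos).1
  have hgle : g x ≤ vOn g Mas := by
    by_contra hcon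
    rw [not_le] at hcon
    obtain ⟨c, hc1, hc2⟩ := EReal.exists_between_coe_real hcon
    by_cases hb : vOn g Mas = ⊥
    · obtain ⟨m, hm⟩ := exists_nat_gt (-c)
      set ε := (1:ℝ)/(m+1) with hεdef
      have hε : (0:ℝ) < ε := by positivity
      have h1 : vOn g Mas < ((c - ε : ℝ) : EReal) := by
        rw [hb]; exact bot_lt_iff_ne_bot.mpr (EReal.coe_ne_bot _)
      have h3 := (hmem ε hε).2 (c - ε) h1
      have h4 : ((c - ε + ε : ℝ) : EReal) ⊔ ((-ε⁻¹ : ℝ) : EReal) ≤ (c : EReal) := by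
        apply sup_le
        · exact_mod_cast (by linarith : c - ε + ε ≤ c)
        · have hinv : ε⁻¹ = (m:ℝ) + 1 := by
            rw [hεdef]; field_simp
          exact_mod_cast (by rw [hinv]; linarith : -ε⁻¹ ≤ c)
      exact absurd (lt_of_le_of_lt (le_trans h3 h4) hc2) (lt_irrefl _)
    · have hb' : vOn g Mas ≠ ⊤ := ne_top_of_lt hc1
      set a := (vOn g Mas).toReal with ha'
      have ha : vOn g Mas = (a : EReal) := (EReal.coe_toReal hb' hb).symm
      have hac : a < c := by
        rw [ha] at hc1; exact_mod_cast hc1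
      set ε := min ((c - a)/2) (1/(1 + |c|)) with hεdef
      have hε : (0:ℝ) < ε := lt_min (by linarith) (by positivity)
      have h1 : vOn g Mas < ((a + ε : ℝ) : EReal) := by
        rw [ha]; exact_mod_cast (by linarith : a < a + ε)
      have h3 := (hmem ε hε).2 (a + ε) h1
      have h4 : ((a + ε + ε : ℝ) : EReal) ⊔ ((-ε⁻¹ : ℝ) : EReal) ≤ (c : EReal) := by
        apply sup_le
        · have : ε ≤ (c - a)/2 := min_le_left _ _
          exact_mod_cast (by linarith : a + ε + ε ≤ c)
        · have h5 : ε ≤ 1/(1 + |c|) := min_le_right _ _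
          have h6 : (1 + |c|) ≤ ε⁻¹ := by
            rw [le_inv_comm₀ (by positivity) hε]
            simpa [one_div] using h5
          have h7 : -ε⁻¹ ≤ c := by
            have := neg_abs_le c
            linarith
          exact_mod_cast h7
      exact absurd (lt_of_le_of_lt (le_trans h3 h4) hc2) (lt_irrefl _)
  refine ⟨hxM, ?_⟩
  rw [vEpsOn]
  by_cases hb : vOn g Mas = ⊥
  · rw [if_pos hb, if_pos rfl]
    rw [hb] at hgle
    exact hgle
  · rw [if_neg hb, EReal.coe_zero, add_zero]
    exact hgle

end Det3

lemma innerLim_subset_outerLim {X : Type*} [MetricSpace X] (S : ℕ → Set X) :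
    innerLim S ⊆ outerLim S := by
  intro x hx
  have hle : atTop.liminf (fun n => EMetric.infEdist x (S n)) ≤
      atTop.limsup (fun n => EMetric.infEdist x (S n)) :=
    liminf_le_limsup (by isBoundedDefault) (by isBoundedDefault)
  have hx' : atTop.limsup (fun n => EMetric.infEdist x (S n)) = 0 := hx
  exact le_antisymm (hx' ▸ hle) zero_le

lemma det_main {X : Type*} [MetricSpace X] {E : ℕ → Set X} {Mas : Set X}
    {gn : ℕ → X → EReal} {g : X → EReal}
    (hE_closed : ∀ m, IsClosed (E m)) (hE_anti : Antitone E)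
    (hMasE : ∀ n, Mas ⊆ E n)
    (hsep : ∀ x ∉ Mas, ∃ δ > (0:ℝ), ∃ N, ∀ n ≥ N, E n ∩ Metric.ball x δ = ∅)
    (hg_noBot : ∀ x, g x ≠ ⊥) (hg_lsc : LowerSemicontinuous g)
    (hcc : ContConv gn g) (hfeas : ∃ x ∈ Mas, g x < ⊤) (hlc : EvLevelCompact gn E) :
    (⋂ ε ∈ Ioi (0:ℝ), innerLim (fun n => argminOn (gn n) (E n) ε)) = argminOn g Mas 0 ∧
      argminOn g Mas 0 = ⋂ ε ∈ Ioi (0:ℝ), outerLim (fun n => argminOn (gn n) (E n) ε) := by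
  have h_limsup := limsup_vOn_le hMasE hcc
  have h_liminf := vOn_le_liminf hE_closed hE_anti hsep hcc hlc
  have hvs_ne_bot := vOn_ne_bot hMasE hg_noBot hg_lsc hcc hlc
  have hvs_ne_top : vOn g Mas ≠ ⊤ := by
    obtain ⟨x, hxM, hx⟩ := hfeas
    exact ne_top_of_lt (lt_of_le_of_lt (vOn_le hxM) hx)
  have hc1 := claim1 hMasE hcc h_liminf hvs_ne_bot hvs_ne_top
  have hc2 := claim2 hE_closed hE_anti hsep hcc h_limsup
  have hio : (⋂ ε ∈ Ioi (0:ℝ), innerLim (fun n => argminOn (gn n) (E n) ε)) ⊆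
      ⋂ ε ∈ Ioi (0:ℝ), outerLim (fun n => argminOn (gn n) (E n) ε) :=
    iInter₂_mono fun ε _ => innerLim_subset_outerLim _
  exact ⟨Subset.antisymm (hio.trans hc2) hc1, Subset.antisymm (hc1.trans hio) hc2⟩

section Prob

variable {Ξ : Type*} [MeasurableSpace Ξ] {ℙ : Measure Ξ} [IsProbabilityMeasure ℙ]
  {T : Ξ → Ξ}

lemma recurrence (hT : Ergodic T ℙ) {A : Set Ξ} (hA : MeasurableSet A)
    (hpos : ℙ A ≠ 0) : ∀ᵐ ξ ∂ℙ, ∃ k, 1 ≤ k ∧ T^[k] ξ ∈ A := by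
  set C : Set Ξ := ⋃ k : ℕ, T^[k+1] ⁻¹' A with hC
  have hCmeas : MeasurableSet C :=
    MeasurableSet.iUnion fun k => (hT.measurable.iterate (k+1)) hA
  have hsub : T ⁻¹' C ⊆ C := by
    intro ξ hξ
    obtain ⟨s, ⟨k, rfl⟩, hks⟩ := hξ
    refine mem_iUnion.mpr ⟨k+1, ?_⟩
    show T^[k+2] ξ ∈ A
    rw [Function.iterate_succ_apply]
    exact hks
  have := hT.ae_empty_or_univ_of_preimage_ae_le hCmeas.nullMeasurableSet
    (HasSubset.Subset.eventuallyLE hsub)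
  rcases this with h | h
  · exfalso
    have hC0 : ℙ C = 0 := ae_eq_empty.mp h
    have hTA : ℙ (T ⁻¹' A) = ℙ A := hT.measure_preimage hA.nullMeasurableSet
    have hsub1 : T ⁻¹' A ⊆ C := by
      intro ξ hξ
      exact mem_iUnion.mpr ⟨0, by simpa using hξ⟩
    have := measure_mono_null hsub1 hC0
    rw [hTA] at this
    exact hpos this
  · have : ∀ᵐ ξ ∂ℙ, ξ ∈ C := by
      rw [ae_iff]
      have : {ξ | ¬ ξ ∈ C} = Cᶜ := rfl
      rw [this]
      exact ae_eq_univ.mp h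
    refine this.mono fun ξ hξ => ?_
    obtain ⟨s, ⟨k, rfl⟩, hks⟩ := hξ
    exact ⟨k+1, Nat.le_add_left 1 k, hks⟩

end Prob

section Prob2

variable {X : Type*} [MetricSpace X] [SecondCountableTopology X]
  {Ξ : Type*} [MeasurableSpace Ξ] {ℙ : Measure Ξ} [IsProbabilityMeasure ℙ]
  {T : Ξ → Ξ} {M : Ξ → Set X}

lemma as_subset (hT : Ergodic T ℙ) (hM_closed : ∀ ζ, IsClosed (M ζ)) :
    ∀ᵐ ξ ∂ℙ, ∀ n : ℕ, {y : X | ∀ᵐ ζ ∂ℙ, y ∈ M ζ} ⊆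
      ⋂ k ∈ Finset.Icc 1 n, M (T^[k] ξ) := by
  set Mas : Set X := {y : X | ∀ᵐ ζ ∂ℙ, y ∈ M ζ} with hMas
  obtain ⟨s, hsc, hsd⟩ := TopologicalSpace.exists_countable_dense (↥Mas)
  set D : Set X := Subtype.val '' s with hD
  have hDc : D.Countable := hsc.image _
  have hDsub : D ⊆ Mas := by
    rintro d ⟨⟨y, hy⟩, _, rfl⟩
    exact hy
  have hDdense : Mas ⊆ closure D := by
    intro x hx
    have h1 : (⟨x, hx⟩ : ↥Mas) ∈ closure s := by
      rw [hsd.closure_eq]; trivial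
    have h2 : x ∈ Subtype.val '' closure s := ⟨⟨x, hx⟩, h1, rfl⟩
    exact (image_closure_subset_closure_image continuous_subtype_val) h2
  have hae : ∀ᵐ ξ ∂ℙ, ∀ d ∈ D, ∀ k : ℕ, d ∈ M (T^[k] ξ) := by
    rw [ae_ball_iff hDc]
    intro d hd
    rw [ae_all_iff]
    intro k
    have hnull : ℙ {ζ | ¬ d ∈ M ζ} = 0 := ae_iff.mp (hDsub hd)
    rw [ae_iff]
    have heq : {ξ | ¬ d ∈ M (T^[k] ξ)} = T^[k] ⁻¹' {ζ | ¬ d ∈ M ζ} := rfl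
    rw [heq]
    exact (hT.toMeasurePreserving.iterate k).quasiMeasurePreserving.preimage_null hnull
  refine hae.mono fun ξ hξ n => ?_
  have hDE : D ⊆ ⋂ k ∈ Finset.Icc 1 n, M (T^[k] ξ) := by
    intro d hd
    exact mem_iInter₂.mpr fun k _ => hξ d hd k
  have hclosed : IsClosed (⋂ k ∈ Finset.Icc 1 n, M (T^[k] ξ)) :=
    isClosed_biInter fun k _ => hM_closed _
  calc Mas ⊆ closure D := hDdense
    _ ⊆ closure (⋂ k ∈ Finset.Icc 1 n, M (T^[k] ξ)) := closure_mono hDE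
    _ = _ := hclosed.closure_eq

lemma sep_ae (hT : Ergodic T ℙ) (hM_closed : ∀ ζ, IsClosed (M ζ))
    (hM_meas : ∀ U : Set X, IsOpen U → MeasurableSet {ξ | (M ξ ∩ U).Nonempty}) :
    ∀ᵐ ξ ∂ℙ, ∀ x ∉ {y : X | ∀ᵐ ζ ∂ℙ, y ∈ M ζ}, ∃ δ > (0:ℝ), ∃ N, ∀ n ≥ N,
      (⋂ k ∈ Finset.Icc 1 n, M (T^[k] ξ)) ∩ Metric.ball x δ = ∅ := by
  obtain ⟨Q, hQc, hQd⟩ := TopologicalSpace.exists_countable_dense X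
  set A : X → ℝ → Set Ξ := fun q r => {ζ | ¬ (M ζ ∩ Metric.ball q r).Nonempty} with hA
  have hAmeas : ∀ q r, MeasurableSet (A q r) := fun q r =>
    (hM_meas _ Metric.isOpen_ball).compl
  have hae : ∀ᵐ ξ ∂ℙ, ∀ q ∈ Q, ∀ r : ℚ, ℙ (A q (r:ℝ)) ≠ 0 →
      ∃ k, 1 ≤ k ∧ T^[k] ξ ∈ A q (r:ℝ) := by
    rw [ae_ball_iff hQc]
    intro q _
    rw [ae_all_iff]
    intro r
    by_cases h : ℙ (A q (r:ℝ)) ≠ 0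
    · exact (recurrence hT (hAmeas q r) h).mono fun ξ hξ _ => hξ
    · filter_upwards with ξ h2
      exact absurd h2 h
  refine hae.mono fun ξ hξ x hx => ?_
  have hnn : ℙ {ζ | ¬ x ∈ M ζ} ≠ 0 := fun h0 => hx (ae_iff.mpr h0)
  have hcover : {ζ | ¬ x ∈ M ζ} ⊆
      ⋃ j : ℕ, {ζ | ¬ (M ζ ∩ Metric.ball x (1/((j:ℝ)+1))).Nonempty} := by
    intro ζ hζ
    have hopen : IsOpen (M ζ)ᶜ := (hM_closed ζ).isOpen_compl
    obtain ⟨ε, hε, hball⟩ := Metric.isOpen_iff.mp hopen x hζ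
    obtain ⟨j, hj⟩ := exists_nat_one_div_lt hε
    refine mem_iUnion.mpr ⟨j, ?_⟩
    rintro ⟨y, hyM, hyb⟩
    have : y ∈ Metric.ball x ε := Metric.ball_subset_ball hj.le hyb
    exact hball this hyM
  have hexj : ∃ j : ℕ, ℙ {ζ | ¬ (M ζ ∩ Metric.ball x (1/((j:ℝ)+1))).Nonempty} ≠ 0 := by
    by_contra hall
    push_neg at hall
    refine hnn (measure_mono_null hcover (measure_iUnion_null fun j => ?_))
    simpa [Set.not_nonempty_iff_eq_empty] using hall j
  obtain ⟨j, hj⟩ := hexj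
  set r0 : ℝ := 1/((j:ℝ)+1) with hr0def
  have hr0 : (0:ℝ) < r0 := by positivity
  obtain ⟨q, hqQ, hq⟩ := hQd.exists_dist_lt x (by positivity : (0:ℝ) < r0/3)
  obtain ⟨rq, hrq1, hrq2⟩ := exists_rat_btwn (by linarith : r0/3 < 2*r0/3)
  have hsubball : Metric.ball q (rq:ℝ) ⊆ Metric.ball x r0 := by
    intro y hy
    rw [Metric.mem_ball] at hy ⊢
    have h1 : dist y x ≤ dist y q + dist q x := dist_triangle y q x
    have h2 : dist q x = dist x q := dist_comm q x
    linarith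
  have hposA : ℙ (A q (rq:ℝ)) ≠ 0 := by
    refine fun h0 => hj (measure_mono_null ?_ h0)
    intro ζ hζ
    rintro ⟨y, hyM, hyb⟩
    exact hζ ⟨y, hyM, hsubball hyb⟩
  obtain ⟨k, hk1, hk2⟩ := hξ q hqQ rq hposA
  have hdxq : dist x q < (rq:ℝ) := lt_trans hq hrq1
  refine ⟨(rq:ℝ) - dist x q, by linarith, k, fun n hn => ?_⟩
  rw [eq_empty_iff_forall_notMem]
  rintro y ⟨hyE, hyb⟩
  have hyM : y ∈ M (T^[k] ξ) := by
    have hkmem : k ∈ Finset.Icc 1 n := Finset.mem_Icc.mpr ⟨hk1, hn⟩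
    exact mem_iInter₂.mp hyE k hkmem
  have hyq : y ∈ Metric.ball q (rq:ℝ) := by
    rw [Metric.mem_ball] at hyb ⊢
    have := dist_triangle y x q
    linarith
  exact hk2 ⟨y, hyM, hyq⟩

end Prob2


/-- if the robust problem is feasible and `g n` is eventually level-compact
on `E n ξ` a.s., then for a.e. `ξ`:
`⋂_{ε>0} liminf_n (ε-argmin_{E n ξ} g n) = argmin_{M_as} g = ⋂_{ε>0} limsup_n (ε-argmin_{E n ξ} g n)`. -/
theorem ergodic_argmin_characterization {X : Type*} [MetricSpace X] [PolishSpace X]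
    {Ξ : Type*} [MeasurableSpace Ξ] (ℙ : Measure Ξ) [IsProbabilityMeasure ℙ] [ℙ.IsComplete]
    (T : Ξ → Ξ) (hT : Ergodic T ℙ)
    (M : Ξ → Set X) (hM_closed : ∀ ξ, IsClosed (M ξ)) (hM_meas : MeasurableMultifun M)
    (g : X → EReal) (gn : ℕ → X → EReal)
    (hg_noBot : ∀ x, g x ≠ ⊥) (hgn_noBot : ∀ n x, gn n x ≠ ⊥)
    (hg_lsc : LowerSemicontinuous g) (hgn_lsc : ∀ n, LowerSemicontinuous (gn n))
    (hcc : ContConv gn g)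
    (hfeas : ∃ x ∈ {y : X | ∀ᵐ ζ ∂ℙ, y ∈ M ζ}, g x < ⊤)
    (hlc : ∀ᵐ ξ ∂ℙ, EvLevelCompact gn (fun n => ⋂ k ∈ Finset.Icc 1 n, M (T^[k] ξ))) :
    ∀ᵐ ξ ∂ℙ,
      (⋂ ε ∈ Ioi (0 : ℝ), innerLim (fun n =>
          argminOn (gn n) (⋂ k ∈ Finset.Icc 1 n, M (T^[k] ξ)) ε)) =
        argminOn g {y : X | ∀ᵐ ζ ∂ℙ, y ∈ M ζ} 0 ∧
      argminOn g {y : X | ∀ᵐ ζ ∂ℙ, y ∈ M ζ} 0 =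
        ⋂ ε ∈ Ioi (0 : ℝ), outerLim (fun n =>
          argminOn (gn n) (⋂ k ∈ Finset.Icc 1 n, M (T^[k] ξ)) ε) := by
  have hmas := as_subset (ℙ := ℙ) hT hM_closed
  have hsepae := sep_ae (ℙ := ℙ) hT hM_closed hM_meas
  filter_upwards [hmas, hsepae, hlc] with ξ h1 h2 h3
  exact det_main (fun n => isClosed_biInter fun k _ => hM_closed _)
    (fun m n hmn x hx => mem_iInter₂.mpr fun k hk =>
      mem_iInter₂.mp hx k (Finset.mem_Icc.mpr
        ⟨(Finset.mem_Icc.mp hk).1, le_trans (Finset.mem_Icc.mp hk).2 hmn⟩))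
    (h1) (h2) hg_noBot hg_lsc hcc hfeas h3
end
end

section
/- Let X be a Polish space, (Ξ, 𝒜, ℙ) a complete probability space with countable product (Ξ^∞, 𝒜^∞, ℙ^∞), M : Ξ ⇉ X a measurable set-valued map with closed values, g : X → ℝ ∪ {+∞} lower semicontinuous, and g_n : X → ℝ ∪ {+∞} a sequence of lower semicontinuous functions converging continuously to g. For ω = (ξ_k)_{k≥1} set S_n(ω) := ⋂_{k=1}^n M(ξ_k) and M_as := {x ∈ X : x ∈ M(ξ) for ℙ-a.e. ξ}. Assume the robust problem min{g(x) : x ∈ M_as} is feasible (there exists x ∈ M_as with g(x) < +∞) and that, for ℙ^∞-a.e. ω, the sequence g_n is eventually level-compact on S_n(ω). Then for any measurable functions ε_n : Ξ^∞ → (0, +∞) with ε_n(ω) → 0 for ℙ^∞-a.e. ω, one has, for ℙ^∞-a.e. ω ∈ Ξ^∞: ∅ ≠ limsup_n (ε_n(ω)-argmin_{S_n(ω)} g_n) ⊆ argmin_{M_as} g, where limsup_n denotes the Painlevé–Kuratowski outer limit of sets. -/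
open Filter Topology MeasureTheory Set

noncomputable section

section AuxLemmas

open TopologicalSpace

lemma limsup_subseq_le' {α : Type*} [CompleteLattice α] (u : ℕ → α) {φ : ℕ → ℕ}
    (hφ : Tendsto φ atTop atTop) : atTop.limsup (fun j => u (φ j)) ≤ atTop.limsup u := by
  have h : map φ atTop ≤ atTop := hφ
  have h1 : limsup u (map φ atTop) ≤ limsup u atTop := limsup_le_limsup_of_le h
  have e : map u (map φ atTop) = map (fun j => u (φ j)) atTop := Filter.map_map
  have h2 : limsSup (map u (map φ atTop)) = limsSup (map (fun j => u (φ j)) atTop) := by rw [e]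
  calc atTop.limsup (fun j => u (φ j)) = limsSup (map u (map φ atTop)) := h2.symm
    _ ≤ limsup u atTop := h1

lemma liminf_le_subseq' {α : Type*} [CompleteLattice α] (u : ℕ → α) {φ : ℕ → ℕ}
    (hφ : Tendsto φ atTop atTop) : atTop.liminf u ≤ atTop.liminf (fun j => u (φ j)) := by
  have h : map φ atTop ≤ atTop := hφ
  have h1 : liminf u atTop ≤ liminf u (map φ atTop) := liminf_le_liminf_of_le h
  have e : map u (map φ atTop) = map (fun j => u (φ j)) atTop := Filter.map_map
  have h2 : limsInf (map u (map φ atTop)) = limsInf (map (fun j => u (φ j)) atTop) := by rw [e]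
  calc atTop.liminf u ≤ limsInf (map u (map φ atTop)) := h1
    _ = atTop.liminf (fun j => u (φ j)) := h2

variable {X : Type*} [MetricSpace X]

lemma contconv_subseq' {f : ℕ → X → EReal} {g : X → EReal} (h : ContConv f g)
    {x : X} {φ : ℕ → ℕ} (hφ : StrictMono φ) {y : ℕ → X} (hy : Tendsto y atTop (𝓝 x)) :
    Tendsto (fun j => f (φ j) (y j)) atTop (𝓝 (g x)) := by
  classical
  set ψ : ℕ → ℕ := fun n => Nat.findGreatest (fun j => φ j ≤ n) n with hψdef
  have hψφ : ∀ j, ψ (φ j) = j := by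
    intro j
    refine le_antisymm ?_ (Nat.le_findGreatest hφ.le_apply le_rfl)
    by_cases h0 : ψ (φ j) = 0
    · omega
    · have hP : φ (ψ (φ j)) ≤ φ j :=
        Nat.findGreatest_spec (P := fun j' => φ j' ≤ φ j) hφ.le_apply le_rfl
      exact hφ.le_iff_le.1 hP
  have hψ_tendsto : Tendsto ψ atTop atTop := by
    refine tendsto_atTop_atTop.2 fun b => ⟨φ b, fun n hn => ?_⟩
    calc b = ψ (φ b) := (hψφ b).symm
    _ ≤ ψ n := Nat.findGreatest_mono (fun j hj => hj.trans hn) hn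
  have hu : Tendsto (fun n => y (ψ n)) atTop (𝓝 x) := hy.comp hψ_tendsto
  have := (h x (fun n => y (ψ n)) hu).comp hφ.tendsto_atTop
  simpa only [Function.comp_def, hψφ] using this

lemma mem_outerLim_of_subseq' {S : ℕ → Set X} {x : X} {φ : ℕ → ℕ} (hφ : StrictMono φ)
    {y : ℕ → X} (hmem : ∀ j, y j ∈ S (φ j)) (hy : Tendsto y atTop (𝓝 x)) :
    x ∈ outerLim S := by
  have hle : ∀ j, EMetric.infEdist x (S (φ j)) ≤ edist x (y j) := fun j =>
    EMetric.infEdist_le_edist_of_mem (hmem j)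
  have h2 : Tendsto (fun j => edist x (y j)) atTop (𝓝 0) := by
    have h0 : Tendsto (fun _ : ℕ => x) atTop (𝓝 x) := tendsto_const_nhds
    simpa using h0.edist hy
  have h1 : Tendsto (fun j => EMetric.infEdist x (S (φ j))) atTop (𝓝 0) :=
    tendsto_of_tendsto_of_tendsto_of_le_of_le tendsto_const_nhds h2
      (fun j => zero_le) hle
  have hlim : atTop.liminf (fun j => EMetric.infEdist x (S (φ j))) = 0 := h1.liminf_eq
  have : atTop.liminf (fun n => EMetric.infEdist x (S n)) ≤ 0 := by
    calc atTop.liminf (fun n => EMetric.infEdist x (S n))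
        ≤ atTop.liminf (fun j => EMetric.infEdist x (S (φ j))) :=
          liminf_le_subseq' _ hφ.tendsto_atTop
      _ = 0 := hlim
  exact le_antisymm this zero_le

lemma outerLim_subseq' {S : ℕ → Set X} {x : X} (hx : x ∈ outerLim S) :
    ∃ φ : ℕ → ℕ, StrictMono φ ∧ ∃ y : ℕ → X, (∀ j, y j ∈ S (φ j)) ∧
      Tendsto y atTop (𝓝 x) := by
  have hx' : atTop.liminf (fun n => EMetric.infEdist x (S n)) = 0 := hx
  have hfreq : ∀ j : ℕ, ∃ᶠ n in atTop,
      EMetric.infEdist x (S n) < ((j + 1 : ℕ) : ENNReal)⁻¹ := by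
    intro j
    refine Filter.frequently_lt_of_liminf_lt (by isBoundedDefault) ?_
    rw [hx']
    exact ENNReal.inv_pos.2 (ENNReal.natCast_ne_top _)
  obtain ⟨φ, hφ, hP⟩ := Filter.extraction_forall_of_frequently hfreq
  choose y hy hd using fun j => EMetric.infEdist_lt_iff.1 (hP j)
  refine ⟨φ, hφ, y, hy, ?_⟩
  rw [EMetric.tendsto_atTop]
  intro ε hε
  obtain ⟨k, hk⟩ := ENNReal.exists_inv_nat_lt (ne_of_gt hε)
  refine ⟨k, fun j hj => ?_⟩
  calc edist (y j) x = edist x (y j) := edist_comm _ _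
    _ < ((j + 1 : ℕ) : ENNReal)⁻¹ := hd j
    _ ≤ ((k : ℕ) : ENNReal)⁻¹ := by
        apply ENNReal.inv_le_inv.2
        exact Nat.cast_le.2 (by omega)
    _ < ε := hk

open Classical in
lemma det_lemma'
    (S : ℕ → Set X) (hS_closed : ∀ n, IsClosed (S n)) (hS_anti : Antitone S)
    (Mas : Set X) (hMas_sub : ∀ n, Mas ⊆ S n) (hcap : (⋂ n, S n) ⊆ Mas)
    (g : X → EReal) (gn : ℕ → X → EReal)
    (hg_noBot : ∀ x, g x ≠ ⊥)
    (hcc : ContConv gn g)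
    (hfeas : ∃ x₀ ∈ Mas, g x₀ < ⊤)
    (hlc : EvLevelCompact gn S)
    (ε : ℕ → ℝ) (hε_pos : ∀ n, 0 < ε n) (hε0 : Tendsto ε atTop (𝓝 0)) :
    (outerLim (fun n => argminOn (gn n) (S n) (ε n))).Nonempty ∧
      outerLim (fun n => argminOn (gn n) (S n) (ε n)) ⊆ argminOn g Mas 0 := by
  obtain ⟨x₀, hx₀M, hx₀g⟩ := hfeas
  set A : ℕ → Set X := fun n => argminOn (gn n) (S n) (ε n) with hA
  set vE : ℕ → EReal := fun n => vEpsOn (gn n) (S n) (ε n) with hvE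
  have hinv : Tendsto (fun n => -(ε n)⁻¹) atTop atBot := by
    have h1 : Tendsto ε atTop (𝓝[>] 0) :=
      tendsto_nhdsWithin_of_tendsto_nhds_of_eventually_within _ hε0
        (Eventually.of_forall fun n => hε_pos n)
    have h2 : Tendsto (fun n => (ε n)⁻¹) atTop atTop := tendsto_inv_nhdsGT_zero.comp h1
    simpa using tendsto_neg_atBot_iff.2 h2
  have Hvlimsup : atTop.limsup vE ≤ vOn g Mas := by
    rw [vOn]
    refine le_iInf₂ fun x' hx' => ?_
    by_cases hgx : g x' = ⊤
    · rw [hgx]; exact le_top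
    have key : ∀ β : ℝ, g x' < (β : EReal) → atTop.limsup vE ≤ (β : EReal) := by
      intro β hβ
      have ev1 : ∀ᶠ n in atTop, gn n x' < (β : EReal) :=
        (hcc x' (fun _ => x') tendsto_const_nhds).eventually_lt_const hβ
      have ev2 : ∀ᶠ n in atTop, ((-(ε n)⁻¹ : ℝ) : EReal) ≤ (β : EReal) := by
        filter_upwards [hinv.eventually_le_atBot β] with n hn
        exact_mod_cast hn
      have ev3 : ∀ᶠ n in atTop, vE n ≤ (β : EReal) + (ε n : EReal) := by
        filter_upwards [ev1, ev2] with n h1 h2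
        by_cases hb : vOn (gn n) (S n) = ⊥
        · have : vE n = ((-(ε n)⁻¹ : ℝ) : EReal) := by
            rw [hvE]; simp only [vEpsOn, if_pos hb, if_neg (ne_of_gt (hε_pos n))]
          rw [this]
          calc ((-(ε n)⁻¹ : ℝ) : EReal) ≤ (β : EReal) := h2
            _ ≤ (β : EReal) + (ε n : EReal) := by
                rw [← EReal.coe_add]
                exact EReal.coe_le_coe_iff.2 (le_add_of_nonneg_right (hε_pos n).le)
        · have : vE n = vOn (gn n) (S n) + (ε n : EReal) := by
            rw [hvE]; simp only [vEpsOn, if_neg hb]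
          rw [this]
          have hle : vOn (gn n) (S n) ≤ gn n x' := by
            rw [vOn]; exact iInf₂_le x' (hMas_sub n hx')
          exact add_le_add (hle.trans h1.le) le_rfl
      have hβconv : Tendsto (fun n => (β : EReal) + (ε n : EReal)) atTop (𝓝 (β : EReal)) := by
        have : Tendsto (fun n => ((β + ε n : ℝ) : EReal)) atTop (𝓝 ((β : ℝ) : EReal)) := by
          apply (continuous_coe_real_ereal.tendsto _).comp
          simpa using (tendsto_const_nhds (x := β)).add hε0
        simpa [EReal.coe_add] using this
      calc atTop.limsup vE ≤ atTop.limsup (fun n => (β : EReal) + (ε n : EReal)) :=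
            limsup_le_limsup ev3
        _ = (β : EReal) := hβconv.limsup_eq
    by_contra hcon
    push_neg at hcon
    obtain ⟨β, hβ1, hβ2⟩ := EReal.exists_between_coe_real hcon
    exact absurd (key β hβ1) (not_le.2 hβ2)
  have Hne : ∀ n, (A n).Nonempty := by
    intro n
    by_cases hlt : vOn (gn n) (S n) < vE n
    · rw [vOn] at hlt
      obtain ⟨x, hx⟩ := iInf_lt_iff.1 hlt
      obtain ⟨hxS, hxlt⟩ := iInf_lt_iff.1 hx
      exact ⟨x, hxS, hxlt.le⟩
    · push_neg at hlt
      by_cases hb : vOn (gn n) (S n) = ⊥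
      · exfalso
        have : vE n = ((-(ε n)⁻¹ : ℝ) : EReal) := by
          rw [hvE]; simp only [vEpsOn, if_pos hb, if_neg (ne_of_gt (hε_pos n))]
        rw [this, hb] at hlt
        exact absurd hlt (by simp)
      · have hveq : vE n = vOn (gn n) (S n) + (ε n : EReal) := by
          rw [hvE]; simp only [vEpsOn, if_neg hb]
        by_cases ht : vOn (gn n) (S n) = ⊤
        · refine ⟨x₀, hMas_sub n hx₀M, ?_⟩
          show gn n x₀ ≤ vEpsOn (gn n) (S n) (ε n)
          have htop : vEpsOn (gn n) (S n) (ε n) = ⊤ := by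
            rw [vEpsOn, if_neg hb, ht, EReal.top_add_coe]
          rw [htop]; exact le_top
        · exfalso
          have hreal := EReal.coe_toReal ht hb
          rw [hveq, ← hreal, ← EReal.coe_add] at hlt
          have := EReal.coe_le_coe_iff.1 hlt
          linarith [hε_pos n]
  choose xc hxc using Hne
  have hvtop : atTop.limsup vE < ⊤ := by
    refine lt_of_le_of_lt Hvlimsup (lt_of_le_of_lt ?_ hx₀g)
    rw [vOn]; exact iInf₂_le x₀ hx₀M
  obtain ⟨α, hα1, -⟩ := EReal.exists_between_coe_real hvtop
  have evα : ∀ᶠ n in atTop, vE n < (α : EReal) := eventually_lt_of_limsup_lt hα1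
  obtain ⟨N₁, hN₁⟩ := eventually_atTop.1 evα
  obtain ⟨N, hK⟩ := hlc α
  set N₂ := max N N₁ with hN₂
  have hz : ∀ j : ℕ, xc (j + N₂) ∈
      closure (⋃ n ∈ Ici N, {x ∈ S n | gn n x ≤ (α : EReal)}) := by
    intro j
    apply subset_closure
    refine mem_biUnion (show j + N₂ ∈ Ici N from ?_) ?_
    · exact (le_max_left N N₁).trans (Nat.le_add_left _ _)
    · obtain ⟨h1, h2⟩ := hxc (j + N₂)
      exact ⟨h1, h2.trans (hN₁ _ ((le_max_right N N₁).trans (Nat.le_add_left _ _))).le⟩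
  obtain ⟨xs, -, φ, hφ, hconv⟩ := hK.tendsto_subseq hz
  have hxs : xs ∈ outerLim A := by
    refine mem_outerLim_of_subseq' (φ := fun j => φ j + N₂) (y := fun j => xc (φ j + N₂))
      (fun a b hab => Nat.add_lt_add_right (hφ hab) N₂) (fun j => hxc (φ j + N₂)) ?_
    simpa [Function.comp_def] using hconv
  refine ⟨⟨xs, hxs⟩, ?_⟩
  intro x hx
  obtain ⟨ψ, hψ, y, hyA, hyx⟩ := outerLim_subseq' hx
  have hxcap : x ∈ ⋂ n, S n := by
    refine mem_iInter.2 fun n => ?_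
    refine (hS_closed n).mem_of_tendsto hyx ?_
    filter_upwards [eventually_ge_atTop n] with j hj
    exact hS_anti (le_trans hj hψ.le_apply) (hyA j).1
  have hxM : x ∈ Mas := hcap hxcap
  have hconv2 : Tendsto (fun j => gn (ψ j) (y j)) atTop (𝓝 (g x)) :=
    contconv_subseq' hcc hψ hyx
  have hgx : g x ≤ atTop.limsup vE := by
    have h1 : g x = atTop.liminf (fun j => gn (ψ j) (y j)) := hconv2.liminf_eq.symm
    have h2 : atTop.liminf (fun j => gn (ψ j) (y j)) ≤ atTop.liminf (fun j => vE (ψ j)) :=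
      liminf_le_liminf (Eventually.of_forall fun j => (hyA j).2)
    have h3 : atTop.liminf (fun j => vE (ψ j)) ≤ atTop.limsup (fun j => vE (ψ j)) :=
      liminf_le_limsup
    have h4 := limsup_subseq_le' vE hψ.tendsto_atTop
    rw [h1]; exact le_trans h2 (le_trans h3 h4)
  have hgv : g x ≤ vOn g Mas := hgx.trans Hvlimsup
  have hnb : vOn g Mas ≠ ⊥ := fun hb => hg_noBot x (le_bot_iff.1 (hb ▸ hgv))
  refine ⟨hxM, ?_⟩
  show g x ≤ vEpsOn g Mas 0
  rw [vEpsOn, if_neg hnb]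
  simpa using hgv

lemma prod_ae_all' {Ξ : Type*} [MeasurableSpace Ξ] {ℙ : Measure Ξ}
    {P : Measure (ℕ → Ξ)} (hP : IsProductMeasure P ℙ) {B : Set Ξ} (hB : MeasurableSet B)
    [IsProbabilityMeasure P]
    (h1 : ℙ B = 1) : ∀ᵐ ω ∂P, ∀ k, ω k ∈ B := by
  rw [ae_all_iff]
  intro k
  have hEq : {ω : ℕ → Ξ | ∀ i ∈ ({k} : Finset ℕ), ω i ∈ B} = {ω : ℕ → Ξ | ω k ∈ B} := by
    ext ω; simp
  have h2 : P {ω : ℕ → Ξ | ω k ∈ B} = 1 := by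
    rw [← hEq, hP {k} (fun _ => B) (fun _ => hB)]
    simp [h1]
  have hmeas : MeasurableSet {ω : ℕ → Ξ | ω k ∈ B} := measurable_pi_apply k hB
  rw [ae_iff]
  exact (prob_compl_eq_zero_iff hmeas).2 h2

lemma prod_ae_exists' {Ξ : Type*} [MeasurableSpace Ξ] {ℙ : Measure Ξ}
    [IsProbabilityMeasure ℙ]
    {P : Measure (ℕ → Ξ)} (hP : IsProductMeasure P ℙ) {C : Set Ξ} (hC : MeasurableSet C)
    (hpos : 0 < ℙ C) : ∀ᵐ ω ∂P, ∃ k, ω k ∈ C := by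
  rw [ae_iff]
  have hsub : ∀ n : ℕ, {ω : ℕ → Ξ | ¬ ∃ k, ω k ∈ C} ⊆
      {ω : ℕ → Ξ | ∀ i ∈ Finset.range n, ω i ∈ Cᶜ} := by
    intro n ω hω i _
    push_neg at hω
    exact hω i
  have hval : ∀ n : ℕ, P {ω : ℕ → Ξ | ∀ i ∈ Finset.range n, ω i ∈ Cᶜ} = (ℙ Cᶜ) ^ n := by
    intro n
    rw [hP (Finset.range n) (fun _ => Cᶜ) (fun _ => hC.compl)]
    simp
  have hlt1 : ℙ Cᶜ < 1 := by
    rw [measure_compl hC (measure_ne_top _ _), measure_univ]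
    exact ENNReal.sub_lt_self ENNReal.one_ne_top one_ne_zero (ne_of_gt hpos)
  have htend : Tendsto (fun n => (ℙ Cᶜ) ^ n) atTop (𝓝 0) :=
    ENNReal.tendsto_pow_atTop_nhds_zero_of_lt_one hlt1
  have hle : ∀ n, P {ω : ℕ → Ξ | ¬ ∃ k, ω k ∈ C} ≤ (ℙ Cᶜ) ^ n := fun n =>
    (measure_mono (hsub n)).trans_eq (hval n)
  exact le_antisymm (ge_of_tendsto' htend hle) zero_le

lemma mem_multifun_meas' {Ξ : Type*} [MeasurableSpace Ξ] {M : Ξ → Set X}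
    (hM_closed : ∀ ξ, IsClosed (M ξ))
    (hM_meas : MeasurableMultifun M) (d : X) : MeasurableSet {ξ | d ∈ M ξ} := by
  have hEq : {ξ | d ∈ M ξ} =
      ⋂ m : ℕ, {ξ | (M ξ ∩ Metric.ball d (1 / (m + 1))).Nonempty} := by
    ext ξ
    simp only [mem_setOf_eq, mem_iInter]
    constructor
    · intro hd m
      exact ⟨d, hd, Metric.mem_ball_self (by positivity)⟩
    · intro h
      rw [← (hM_closed ξ).closure_eq, Metric.mem_closure_iff]
      intro ε hε
      obtain ⟨m, hm⟩ := exists_nat_one_div_lt hε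
      obtain ⟨y, hyM, hyb⟩ := h m
      exact ⟨y, hyM, lt_trans (by simpa [dist_comm] using hyb) hm⟩
  rw [hEq]
  exact MeasurableSet.iInter fun m => hM_meas _ Metric.isOpen_ball

end AuxLemmas

/-- scenario approach. Under feasibility and eventual level-compactness,
for measurable `ε n > 0` with `ε n ω → 0` a.s., for `P`-a.e. `ω` the outer limit of
the `ε n ω`-argmins of `g n` on `S n ω` is nonempty and contained in the argmin
of `g` on `M_as`. -/
theorem scenario_argmin_convergence {X : Type*} [MetricSpace X] [PolishSpace X]
    {Ξ : Type*} [MeasurableSpace Ξ] (ℙ : Measure Ξ) [IsProbabilityMeasure ℙ] [ℙ.IsComplete]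
    (P : Measure (ℕ → Ξ)) [IsProbabilityMeasure P] (hP : IsProductMeasure P ℙ)
    (M : Ξ → Set X) (hM_closed : ∀ ξ, IsClosed (M ξ)) (hM_meas : MeasurableMultifun M)
    (g : X → EReal) (gn : ℕ → X → EReal)
    (hg_noBot : ∀ x, g x ≠ ⊥) (hgn_noBot : ∀ n x, gn n x ≠ ⊥)
    (hg_lsc : LowerSemicontinuous g) (hgn_lsc : ∀ n, LowerSemicontinuous (gn n))
    (hcc : ContConv gn g)
    (hfeas : ∃ x ∈ {y : X | ∀ᵐ ζ ∂ℙ, y ∈ M ζ}, g x < ⊤)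
    (hlc : ∀ᵐ ω ∂P, EvLevelCompact gn (fun n => ⋂ k ∈ Finset.range n, M (ω k)))
    (εn : ℕ → (ℕ → Ξ) → ℝ) (hεn_meas : ∀ n, Measurable (εn n))
    (hεn_pos : ∀ n ω, 0 < εn n ω)
    (hεn_to0 : ∀ᵐ ω ∂P, Tendsto (fun n => εn n ω) atTop (𝓝 0)) :
    ∀ᵐ ω ∂P,
      (outerLim (fun n =>
          argminOn (gn n) (⋂ k ∈ Finset.range n, M (ω k)) (εn n ω))).Nonempty ∧
      outerLim (fun n =>
          argminOn (gn n) (⋂ k ∈ Finset.range n, M (ω k)) (εn n ω)) ⊆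
        argminOn g {y : X | ∀ᵐ ζ ∂ℙ, y ∈ M ζ} 0 := by
  classical
  set Mas := {y : X | ∀ᵐ ζ ∂ℙ, y ∈ M ζ} with hMasdef
  obtain ⟨D, hD_sub, hD_count, hD_dense⟩ :=
    (TopologicalSpace.IsSeparable.of_separableSpace Mas).exists_countable_dense_subset
  have hP1 : ∀ᵐ ω ∂P, ∀ d ∈ D, ∀ k, d ∈ M (ω k) := by
    rw [ae_ball_iff hD_count]
    intro d hd
    have hae : ∀ᵐ ζ ∂ℙ, d ∈ M ζ := hD_sub hd
    have hmeas := mem_multifun_meas' hM_closed hM_meas d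
    have h1 : ℙ {ξ | d ∈ M ξ} = 1 := by
      rw [← prob_compl_eq_zero_iff hmeas, compl_setOf]
      exact ae_iff.1 hae
    exact prod_ae_all' hP hmeas h1
  have hMas_sub : ∀ᵐ ω ∂P, ∀ k, Mas ⊆ M (ω k) := by
    filter_upwards [hP1] with ω h k x hx
    have hx' : x ∈ closure D := hD_dense hx
    have hsub : D ⊆ M (ω k) := fun d hd => h d hd k
    exact (hM_closed (ω k)).closure_eq ▸ closure_mono hsub hx'
  obtain ⟨b, hb_count, hb_ne, hb_basis⟩ := TopologicalSpace.exists_countable_basis X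
  have hP2 : ∀ᵐ ω ∂P, ∀ U ∈ b, 0 < ℙ {ξ | ¬ (M ξ ∩ U).Nonempty} →
      ∃ k, ¬ (M (ω k) ∩ U).Nonempty := by
    rw [ae_ball_iff hb_count]
    intro U hU
    by_cases hpos : 0 < ℙ {ξ | ¬ (M ξ ∩ U).Nonempty}
    · have hCmeas : MeasurableSet {ξ | ¬ (M ξ ∩ U).Nonempty} := by
        have := (hM_meas U (hb_basis.isOpen hU)).compl
        simpa [compl_setOf] using this
      filter_upwards [prod_ae_exists' hP hCmeas hpos] with ω hω
      intro _; exact hω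
    · filter_upwards with ω h; exact absurd h hpos
  have hcap_sub : ∀ᵐ ω ∂P, (⋂ k, M (ω k)) ⊆ Mas := by
    filter_upwards [hP2] with ω h x hx
    show ∀ᵐ ζ ∂ℙ, x ∈ M ζ
    rw [ae_iff]
    have hsub : {ζ | ¬ x ∈ M ζ} ⊆
        ⋃ U ∈ {U ∈ b | x ∈ U}, {ξ | ¬ (M ξ ∩ U).Nonempty} := by
      intro ζ hζ
      have hopen : IsOpen (M ζ)ᶜ := (hM_closed ζ).isOpen_compl
      obtain ⟨U, hUb, hxU, hUsub⟩ := hb_basis.exists_subset_of_mem_open hζ hopen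
      refine mem_biUnion ⟨hUb, hxU⟩ ?_
      rintro ⟨z, hzM, hzU⟩
      exact hUsub hzU hzM
    refine measure_mono_null hsub ?_
    refine (measure_biUnion_null_iff (hb_count.mono (sep_subset _ _))).2 ?_
    intro U hU
    by_contra hne
    have hpos : 0 < ℙ {ξ | ¬ (M ξ ∩ U).Nonempty} := pos_iff_ne_zero.2 hne
    obtain ⟨k, hk⟩ := h U hU.1 hpos
    exact hk ⟨x, mem_iInter.1 hx k, hU.2⟩
  filter_upwards [hMas_sub, hcap_sub, hlc, hεn_to0] with ω h1 h2 h3 h4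
  exact det_lemma' (fun n => ⋂ k ∈ Finset.range n, M (ω k))
    (fun n => isClosed_biInter fun k _ => hM_closed _)
    (fun n m hnm x hx => mem_iInter₂.2 fun k hk => mem_iInter₂.1 hx k
      (Finset.mem_range.2 (lt_of_lt_of_le (Finset.mem_range.1 hk) hnm)))
    Mas
    (fun n x hx => mem_iInter₂.2 fun k _ => h1 k hx)
    (fun x hx => h2 (mem_iInter.2 fun k =>
      mem_iInter₂.1 (mem_iInter.1 hx (k + 1)) k (Finset.mem_range.2 (Nat.lt_succ_self k))))
    g gn hg_noBot hcc hfeas h3 (fun n => εn n ω) (fun n => hεn_pos n ω) h4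
end
end
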